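/- For every element β of B₃ (in its band presentation), among all representations β = δ^q · T with q an integer and T empty or a positive word in increasing form, there is exactly one for which q is maximal: the integer q, the number t of syllables of T, the initial subscript τ (when t > 0), and the exponent sequence (s₁, …, s_t) are all uniquely determined by β. This gives a normal form solving the word problem in B₃. -/

import Mathlib

/-- The band relations `a₂a₁ = a₃a₂ = a₁a₃`, with subscripts taken modulo 3
(the generator `a₃` is indexed by `0 : ZMod 3`). -/
def bandRels : Set (FreeGroup (ZMod 3)) :=
  { FreeGroup.of 2 * FreeGroup.of 1 * (FreeGroup.of 0 * FreeGroup.of 2)⁻¹,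
    FreeGroup.of 0 * FreeGroup.of 2 * (FreeGroup.of 1 * FreeGroup.of 0)⁻¹ }

/-- The band-presented group `⟨a₁, a₂, a₃ | a₂a₁ = a₃a₂ = a₁a₃⟩` (a model of `B₃`). -/
abbrev BandB3 := PresentedGroup bandRels

/-- The band generators `a i`, indexed by `ZMod 3` (so `a 0 = a₃`). -/
def a (i : ZMod 3) : BandB3 := PresentedGroup.of i

/-- The fundamental element `δ = a₂a₁ (= a₃a₂ = a₁a₃)`. -/
def δ : BandB3 := a 2 * a 1

/-- The positive word in increasing form with initial subscript `τ` and exponent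
sequence `s = (s₁, …, s_t)`, namely `a_τ^{s₁} a_{τ+1}^{s₂} ⋯ a_{τ+t−1}^{s_t}`. -/
def tailProd (τ : ZMod 3) (s : List ℕ) : BandB3 :=
  ((List.range s.length).map (fun i : ℕ => a (τ + (i : ZMod 3)) ^ s.getD i 0)).prod

/-- A tail datum is either `none` (the empty word) or `some (τ, s)` recording the
initial subscript `τ` and the exponent sequence `s`.  Its value in `B₃`: -/
def tailVal : Option (ZMod 3 × List ℕ) → BandB3
  | none => 1
  | some (τ, s) => tailProd τ s

/-- A tail datum is admissible when it is the empty word, or a genuine increasing-form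
positive word: `t = s.length ≥ 1` syllables, all exponents `≥ 1`. -/
def tailOK : Option (ZMod 3 × List ℕ) → Prop
  | none => True
  | some (_, s) => s ≠ [] ∧ ∀ x ∈ s, 1 ≤ x

namespace B3NF

lemma rel_mk {r : FreeGroup (ZMod 3)} (hr : r ∈ bandRels) :
    PresentedGroup.mk bandRels r = 1 :=
  (QuotientGroup.eq_one_iff r).mpr (Subgroup.subset_normalClosure hr)

lemma rel1 : a 2 * a 1 = a 0 * a 2 := by
  have h := rel_mk (Or.inl rfl : (FreeGroup.of 2 * FreeGroup.of 1 * (FreeGroup.of 0 * FreeGroup.of 2)⁻¹ : FreeGroup (ZMod 3)) ∈ bandRels)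
  simp only [map_mul, map_inv] at h
  have : a 2 * a 1 * (a 0 * a 2)⁻¹ = 1 := h
  exact mul_inv_eq_one.mp this

lemma rel2 : a 0 * a 2 = a 1 * a 0 := by
  have h := rel_mk (Or.inr rfl : (FreeGroup.of 0 * FreeGroup.of 2 * (FreeGroup.of 1 * FreeGroup.of 0)⁻¹ : FreeGroup (ZMod 3)) ∈ bandRels)
  simp only [map_mul, map_inv] at h
  have : a 0 * a 2 * (a 1 * a 0)⁻¹ = 1 := h
  exact mul_inv_eq_one.mp this

lemma relδ (i : ZMod 3) : a (i + 1) * a i = δ := by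
  have h3 : i = 0 ∨ i = 1 ∨ i = 2 := by revert i; decide
  unfold δ
  rcases h3 with h | h | h <;> subst h
  · rw [show (0 : ZMod 3) + 1 = 1 from rfl, ← rel2, ← rel1]
  · rfl
  · rw [show (2 : ZMod 3) + 1 = 0 from rfl, rel1]

lemma δ_comm (j : ZMod 3) : a j * δ = δ * a (j + 1) := by
  have h1 : a (j + 2 + 1) * a (j + 2) = δ := relδ (j + 2)
  have h2 : a (j + 1 + 1) * a (j + 1) = δ := relδ (j + 1)
  have e1 : j + 2 + 1 = j := by ring_nf; rw [show (3 : ZMod 3) = 0 by decide]; ring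
  have e2 : j + 1 + 1 = j + 2 := by ring
  rw [e1] at h1
  rw [e2] at h2
  calc a j * δ = a j * (a (j + 2) * a (j + 1)) := by rw [h2]
    _ = a j * a (j + 2) * a (j + 1) := by group
    _ = δ * a (j + 1) := by rw [h1]

lemma δ_comm_inv (j : ZMod 3) : a j * δ⁻¹ = δ⁻¹ * a (j - 1) := by
  have h := δ_comm (j - 1)
  have e : j - 1 + 1 = j := by ring
  rw [e] at h
  calc a j * δ⁻¹ = δ⁻¹ * (δ * a j) * δ⁻¹ := by group
    _ = δ⁻¹ * (a (j - 1) * δ) * δ⁻¹ := by rw [h]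
    _ = δ⁻¹ * a (j - 1) := by group

lemma a_zpow (j : ZMod 3) (q : ℤ) : a j * δ ^ q = δ ^ q * a (j + (q : ZMod 3)) := by
  induction q using Int.induction_on with
  | zero => simp
  | succ n ih =>
      rw [zpow_add_one, ← mul_assoc, ih, mul_assoc, δ_comm, ← mul_assoc, ← zpow_add_one]
      push_cast
      ring_nf
  | pred n ih =>
      rw [zpow_sub_one, ← mul_assoc, ih, mul_assoc, δ_comm_inv, ← mul_assoc, ← zpow_sub_one]
      push_cast
      ring_nf

lemma tailProd_nil (τ : ZMod 3) : tailProd τ [] = 1 := by simp [tailProd]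

lemma tailProd_cons (τ : ZMod 3) (n : ℕ) (r : List ℕ) :
    tailProd τ (n :: r) = a τ ^ n * tailProd (τ + 1) r := by
  unfold tailProd
  rw [List.length_cons, List.range_succ_eq_map, List.map_cons, List.prod_cons]
  simp only [Nat.cast_zero, add_zero, List.getD_cons_zero, List.map_map]
  congr 1
  congr 1
  apply List.map_congr_left
  intro i _
  simp only [Function.comp_apply, List.getD_cons_succ]
  congr 2
  push_cast
  ring



abbrev Raw := ℤ × Option (ZMod 3 × List ℕ)

def OK (x : Raw) : Prop := tailOK x.2

/-- the δ-absorption step: left-multiply `δ^q · a_τ^{s₁}⋯` by `a_{τ+1}`. -/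
def popHead (q : ℤ) (τ : ZMod 3) : List ℕ → Raw
  | [1] => (q + 1, none)
  | 1 :: r => (q + 1, some (τ + 1, r))
  | (n+2) :: r => (q + 1, some (τ, (n+1) :: r))
  | s => (q, some (τ, s))

/-- left multiplication by `a j` on normal-form data. -/
def fRaw (j : ZMod 3) : Raw → Raw
  | (q, none) => (q, some (j + (q : ZMod 3), [1]))
  | (q, some (τ, s)) =>
    if j + (q : ZMod 3) = τ then (q, some (τ, (s.headD 0 + 1) :: s.tail))
    else if j + (q : ZMod 3) = τ + 1 then popHead q τ s
    else (q, some (τ + 2, 1 :: s))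

lemma tri (m τ : ZMod 3) : m = τ ∨ m = τ + 1 ∨ m = τ + 2 := by revert m τ; decide

lemma zne1 : ∀ τ : ZMod 3, τ + 1 ≠ τ := by decide
lemma zne2 : ∀ τ : ZMod 3, τ + 2 ≠ τ := by decide
lemma z3 : ∀ τ : ZMod 3, τ + 3 = τ := by decide
lemma z21 : ∀ τ : ZMod 3, τ + 2 + 1 = τ := by decide
lemma z12 : ∀ τ : ZMod 3, τ + 1 + 2 = τ := by decide
lemma z22 : ∀ τ : ZMod 3, τ + 2 + 2 = τ + 1 := by decide

lemma castq1 (q : ℤ) : (((q + 1 : ℤ)) : ZMod 3) = (q : ZMod 3) + 1 := by push_cast; ring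


lemma fOK (j : ZMod 3) (x : Raw) (hx : OK x) : OK (fRaw j x) := by
  obtain ⟨q, T⟩ := x
  match T with
  | none => simp [fRaw, OK, tailOK]
  | some (τ, s) =>
      obtain ⟨hne, hall⟩ := hx
      match s with
      | [] => exact absurd rfl hne
      | n :: t =>
        have hn : 1 ≤ n := hall n (List.mem_cons_self)
        obtain ⟨k, rfl⟩ : ∃ k, n = k + 1 := ⟨n - 1, by omega⟩
        simp only [fRaw]
        split_ifs with h1 h2
        · refine ⟨List.cons_ne_nil _ _, ?_⟩
          intro x hx
          rcases List.mem_cons.mp hx with h | h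
          · simp at h; omega
          · exact hall x (List.mem_cons_of_mem _ (by simpa using h))
        · match k, t with
          | 0, [] => exact trivial
          | 0, u :: t' =>
              exact ⟨List.cons_ne_nil _ _, fun x hx => hall x (List.mem_cons_of_mem _ hx)⟩
          | (k+1), t =>
              refine ⟨List.cons_ne_nil _ _, ?_⟩
              intro x hx
              rcases List.mem_cons.mp hx with h | h
              · omega
              · exact hall x (List.mem_cons_of_mem _ h)
        · refine ⟨List.cons_ne_nil _ _, ?_⟩
          intro x hx
          rcases List.mem_cons.mp hx with h | h
          · omega
          · exact hall x h

lemma fStep (i : ZMod 3) (x : Raw) (hx : OK x) :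
    fRaw (i + 1) (fRaw i x) = (x.1 + 1, x.2) := by
  obtain ⟨q, T⟩ := x
  match T with
  | none =>
      have h2 : i + 1 + ((q : ℤ) : ZMod 3) = (i + ((q:ℤ) : ZMod 3)) + 1 := by ring
      have hA : ¬ (i + 1 + ((q : ℤ) : ZMod 3) = i + ((q:ℤ) : ZMod 3)) := by
        rw [h2]; exact zne1 _
      simp only [fRaw]
      rw [if_neg hA, if_pos h2]
      simp [popHead]
  | some (τ, s) =>
      obtain ⟨hne, hall⟩ := hx
      match s with
      | [] => exact absurd rfl hne
      | n :: t =>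
        have hn : 1 ≤ n := hall n (List.mem_cons_self)
        obtain ⟨k, rfl⟩ : ∃ k, n = k + 1 := ⟨n - 1, by omega⟩
        rcases tri (i + ((q:ℤ) : ZMod 3)) τ with h | h | h
        · -- bump then pop
          have h2 : i + 1 + ((q : ℤ) : ZMod 3) = τ + 1 := by rw [← h]; ring
          have hA : ¬ (i + 1 + ((q : ℤ) : ZMod 3) = τ) := by rw [h2]; exact zne1 τ
          simp only [fRaw, if_pos h, List.headD_cons, List.tail_cons]
          rw [if_neg hA, if_pos h2]
          simp [popHead]
        · -- pop then rebuild
          have hA : ¬ (i + ((q : ℤ) : ZMod 3) = τ) := by rw [h]; exact zne1 τ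
          have h2 : i + 1 + (((q+1) : ℤ) : ZMod 3) = τ := by
            rw [castq1, show i + 1 + (((q:ℤ) : ZMod 3) + 1) = (i + ((q:ℤ):ZMod 3)) + 2 by ring,
              h, z12]
          simp only [fRaw, if_neg hA, if_pos h]
          match k, t with
          | 0, [] =>
              simp only [popHead, fRaw]
              rw [Prod.mk.injEq]
              exact ⟨rfl, by rw [h2]⟩
          | 0, u :: t' =>
              have hB : ¬ (i + 1 + (((q+1) : ℤ) : ZMod 3) = τ + 1) := by
                rw [h2]; exact fun hh => zne1 τ hh.symm
              have hC : ¬ (i + 1 + (((q+1) : ℤ) : ZMod 3) = τ + 1 + 1) := by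
                rw [h2]; exact fun hh => zne2 τ (by rw [show τ + 1 + 1 = τ + 2 by ring] at hh; exact hh.symm)
              simp only [popHead, fRaw]
              rw [if_neg hB, if_neg hC, z12]
          | (k+1), t =>
              have hB : i + 1 + (((q+1) : ℤ) : ZMod 3) = τ := h2
              simp only [popHead, fRaw]
              rw [if_pos hB]
              simp
        · -- prepend then pop
          have hA : ¬ (i + ((q : ℤ) : ZMod 3) = τ) := by rw [h]; exact zne2 τ
          have hB : ¬ (i + ((q : ℤ) : ZMod 3) = τ + 1) := by
            rw [h]; intro hh
            exact zne1 (τ + 1) (by rw [show τ + 1 + 1 = τ + 2 by ring]; exact hh)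
          have h2 : i + 1 + ((q : ℤ) : ZMod 3) = (τ + 2) + 1 := by rw [← h]; ring
          have hC : ¬ (i + 1 + ((q : ℤ) : ZMod 3) = τ + 2) := by
            rw [h2]; exact zne1 _
          simp only [fRaw, if_neg hA, if_neg hB]
          rw [if_neg hC, if_pos h2]
          simp only [popHead]
          rw [z21]


def V (x : Raw) : BandB3 := δ ^ x.1 * tailVal x.2

lemma V_f (j : ZMod 3) (x : Raw) (hx : OK x) : V (fRaw j x) = a j * V x := by
  obtain ⟨q, T⟩ := x
  have key : a j * δ ^ q = δ ^ q * a (j + ((q:ℤ) : ZMod 3)) := a_zpow j q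
  match T with
  | none =>
      show V (q, some (j + ((q:ℤ):ZMod 3), [1])) = a j * (δ ^ q * tailVal none)
      simp only [V, tailVal, tailProd_cons, tailProd_nil, pow_one, mul_one, ← mul_assoc, key]
  | some (τ, s) =>
      obtain ⟨hne, hall⟩ := hx
      match s with
      | [] => exact absurd rfl hne
      | n :: t =>
        have hn : 1 ≤ n := hall n (List.mem_cons_self)
        obtain ⟨k, rfl⟩ : ∃ k, n = k + 1 := ⟨n - 1, by omega⟩
        have rhs : a j * (δ ^ q * tailProd τ ((k+1) :: t))
            = δ ^ q * (a (j + ((q:ℤ):ZMod 3)) * tailProd τ ((k+1) :: t)) := by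
          rw [← mul_assoc, key, mul_assoc]
        have vq : V (q, some (τ, (k+1) :: t)) = δ ^ q * tailProd τ ((k+1) :: t) := rfl
        rcases tri (j + ((q:ℤ) : ZMod 3)) τ with h | h | h
        · -- bump
          simp only [fRaw, if_pos h, List.headD_cons, List.tail_cons]
          show V (q, some (τ, (k+1+1) :: t)) = _
          rw [V, vq, rhs, h]
          show δ ^ q * tailVal (some (τ, (k+1+1) :: t)) = _
          rw [tailVal, tailProd_cons, tailProd_cons, pow_succ' (a τ) (k+1), mul_assoc]
        · -- pop
          have hA : ¬ (j + ((q : ℤ) : ZMod 3) = τ) := by rw [h]; exact zne1 τ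
          simp only [fRaw, if_neg hA, if_pos h]
          rw [vq, rhs, h]
          match k, t with
          | 0, [] =>
              have pk : δ ^ (q+1) = δ ^ q * (a (τ+1) * a τ) := by
                rw [relδ τ, zpow_add_one]
              show V (q+1, none) = _
              simp only [V, tailVal, tailProd_cons, tailProd_nil, zero_add, pow_one, mul_one]
              rw [pk]
          | 0, u :: t' =>
              have pk : δ ^ (q+1) = δ ^ q * (a (τ+1) * a τ) := by
                rw [relδ τ, zpow_add_one]
              show V (q+1, some (τ+1, u :: t')) = _
              simp only [V, tailVal, tailProd_cons, tailProd_nil, zero_add, pow_one, mul_one]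
              rw [pk]
              group
          | (k+1), t =>
              show V (q+1, some (τ, (k+1) :: t)) = _
              rw [V]
              show δ ^ (q+1) * tailVal (some (τ, (k+1) :: t)) = _
              rw [tailVal, tailProd_cons, tailProd_cons,
                show a τ ^ (k+1+1) = a τ * a τ ^ (k+1) from pow_succ' (a τ) (k+1),
                zpow_add_one]
              calc δ ^ q * δ * (a τ ^ (k+1) * tailProd (τ+1) t)
                  = δ ^ q * (δ * (a τ ^ (k+1) * tailProd (τ+1) t)) := by group
                _ = δ ^ q * (a (τ+1) * (a τ * (a τ ^ (k+1) * tailProd (τ+1) t))) := by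
                    rw [← relδ τ]; group
                _ = δ ^ q * (a (τ+1) * (a τ * a τ ^ (k+1) * tailProd (τ+1) t)) := by group
        · -- prepend
          have hA : ¬ (j + ((q : ℤ) : ZMod 3) = τ) := by rw [h]; exact zne2 τ
          have hB : ¬ (j + ((q : ℤ) : ZMod 3) = τ + 1) := by
            rw [h]; intro hh
            exact zne1 (τ + 1) (by rw [show τ + 1 + 1 = τ + 2 by ring]; exact hh)
          simp only [fRaw, if_neg hA, if_neg hB]
          show V (q, some (τ + 2, 1 :: (k+1) :: t)) = _
          rw [V, vq, rhs, h]
          show δ ^ q * tailVal (some (τ + 2, 1 :: (k+1) :: t)) = _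
          rw [tailVal, tailProd_cons, pow_one, z21]

abbrev NFT := {x : Raw // OK x}

def F (j : ZMod 3) (x : NFT) : NFT := ⟨fRaw j x.1, fOK j x.1 x.2⟩

def shiftPerm : Equiv.Perm NFT where
  toFun x := ⟨(x.1.1 + 1, x.1.2), x.2⟩
  invFun x := ⟨(x.1.1 - 1, x.1.2), x.2⟩
  left_inv x := by apply Subtype.ext; simp
  right_inv x := by apply Subtype.ext; simp

lemma F_step (i : ZMod 3) (x : NFT) : F (i + 1) (F i x) = shiftPerm x :=
  Subtype.ext (fStep i x.1 x.2)

lemma F_bij (j : ZMod 3) : Function.Bijective (F j) := by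
  constructor
  · intro x y h
    have h2 : shiftPerm x = shiftPerm y := by
      rw [← F_step j x, ← F_step j y, h]
    exact shiftPerm.injective h2
  · intro y
    refine ⟨F (j + 2) (shiftPerm.symm y), ?_⟩
    have h := F_step (j + 2) (shiftPerm.symm y)
    rw [z21] at h
    rw [h, Equiv.apply_symm_apply]

noncomputable def Fp (j : ZMod 3) : Equiv.Perm NFT := Equiv.ofBijective (F j) (F_bij j)

lemma Fp_apply (j : ZMod 3) (x : NFT) : Fp j x = F j x := rfl

lemma Fp_step (i : ZMod 3) : Fp (i + 1) * Fp i = shiftPerm := by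
  apply Equiv.ext
  intro x
  exact F_step i x

lemma hrels : ∀ r ∈ bandRels, FreeGroup.lift (fun i => Fp i) r = 1 := by
  intro r hr
  have k1 : Fp 2 * Fp 1 = shiftPerm := by
    have := Fp_step 1; norm_num at this; exact this
  have k2 : Fp 0 * Fp 2 = shiftPerm := by
    have := Fp_step 2
    rw [show (2 : ZMod 3) + 1 = 0 by decide] at this; exact this
  have k3 : Fp 1 * Fp 0 = shiftPerm := by
    have := Fp_step 0; norm_num at this; exact this
  rcases hr with rfl | rfl <;>
    simp only [map_mul, map_inv, FreeGroup.lift_apply_of] <;> rw [mul_inv_eq_one]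
  · rw [k1, k2]
  · rw [k2, k3]

noncomputable def φ : BandB3 →* Equiv.Perm NFT := PresentedGroup.toGroup hrels

lemma φ_a (i : ZMod 3) : φ (a i) = Fp i := PresentedGroup.toGroup.of hrels

lemma Vφ (β : BandB3) : ∀ x : NFT, V ((φ β) x).1 = β * V x.1 := by
  refine PresentedGroup.induction_on (C := fun b => ∀ x : NFT, V ((φ b) x).1 = b * V x.1) β ?_
  intro z
  induction z using FreeGroup.induction_on with
  | C1 =>
      intro x
      rw [map_one, map_one, Equiv.Perm.one_apply, one_mul]
  | of i =>
      intro x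
      have : PresentedGroup.mk bandRels (FreeGroup.of i) = a i := rfl
      rw [this, φ_a, Fp_apply]
      exact V_f i x.1 x.2
  | inv_of i ih =>
      intro x
      set g := PresentedGroup.mk bandRels (FreeGroup.of i) with hg
      rw [map_inv, map_inv]
      have h := ih ((φ g)⁻¹ x)
      rw [show (φ g) ((φ g)⁻¹ x) = x from (Equiv.eq_symm_apply _).mp rfl] at h
      rw [eq_inv_mul_iff_mul_eq, ← h]
  | mul y z ihy ihz =>
      intro x
      rw [map_mul, map_mul, Equiv.Perm.mul_apply, ihy, ihz, mul_assoc]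

def pt : NFT := ⟨((0 : ℤ), none), trivial⟩

lemma φδ : φ δ = shiftPerm := by
  have h : φ δ = Fp 2 * Fp 1 := by
    rw [show δ = a 2 * a 1 from rfl, map_mul, φ_a, φ_a]
  rw [h]
  have := Fp_step 1; norm_num at this; exact this

lemma shift_zpow (q : ℤ) : ∀ x : NFT, ((shiftPerm ^ q) x).1 = (x.1.1 + q, x.1.2) := by
  induction q using Int.induction_on with
  | zero => intro x; simp
  | succ n ih =>
      intro x
      rw [zpow_add_one, Equiv.Perm.mul_apply, ih (shiftPerm x)]
      show (x.1.1 + 1 + (n : ℤ), x.1.2) = _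
      rw [Prod.mk.injEq]
      exact ⟨by ring, rfl⟩
  | pred n ih =>
      intro x
      rw [zpow_sub_one, Equiv.Perm.mul_apply, ih (shiftPerm⁻¹ x)]
      show ((shiftPerm.symm x).1.1 + (-n : ℤ), (shiftPerm.symm x).1.2) = _
      show (x.1.1 - 1 + (-n : ℤ), x.1.2) = _
      rw [Prod.mk.injEq]
      exact ⟨by ring, rfl⟩

lemma φδq (q : ℤ) (x : NFT) : ((φ (δ ^ q)) x).1 = (x.1.1 + q, x.1.2) := by
  rw [map_zpow, φδ]
  exact shift_zpow q x

lemma cast0 : ((((0:ℤ)) : ZMod 3)) = 0 := by push_cast; ring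

lemma powB (τ : ZMod 3) : ∀ n : ℕ, 1 ≤ n →
    ((φ (a τ ^ n)) pt).1 = ((0 : ℤ), some (τ, [n])) := by
  intro n hn
  induction n with
  | zero => omega
  | succ m ih =>
      rcases Nat.eq_or_lt_of_le hn with h1 | h1
      · -- m + 1 = 1
        have hm : m = 0 := by omega
        subst hm
        rw [pow_one, φ_a, Fp_apply]
        show fRaw τ ((0:ℤ), none) = _
        simp only [fRaw, cast0, add_zero]
      · have hm : 1 ≤ m := by omega
        have hval := ih hm
        have heq : (φ (a τ ^ m)) pt = ⟨((0:ℤ), some (τ, [m])), ⟨List.cons_ne_nil _ _, by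
            intro x hx; rcases List.mem_cons.mp hx with h | h
            · omega
            · simp at h⟩⟩ := Subtype.ext hval
        rw [pow_succ' (a τ) m, map_mul, Equiv.Perm.mul_apply, heq, φ_a, Fp_apply]
        show fRaw τ ((0:ℤ), some (τ, [m])) = _
        simp only [fRaw, cast0, add_zero, if_true, List.headD_cons, List.tail_cons]

lemma powA (τ : ZMod 3) (r : List ℕ) (h : OK ((0:ℤ), some (τ + 1, r))) :
    ∀ n : ℕ, 1 ≤ n →
    ((φ (a τ ^ n)) ⟨((0:ℤ), some (τ + 1, r)), h⟩).1 = ((0 : ℤ), some (τ, n :: r)) := by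
  intro n hn
  have hA : ¬ (τ + (((0:ℤ)) : ZMod 3) = τ + 1) := by
    rw [cast0, add_zero]; exact fun hh => zne1 τ hh.symm
  have hB : ¬ (τ + (((0:ℤ)) : ZMod 3) = τ + 1 + 1) := by
    rw [cast0, add_zero, show τ + 1 + 1 = τ + 2 by ring]
    exact fun hh => zne2 τ hh.symm
  induction n with
  | zero => omega
  | succ m ih =>
      rcases Nat.eq_or_lt_of_le hn with h1 | h1
      · have hm : m = 0 := by omega
        subst hm
        rw [pow_one, φ_a, Fp_apply]
        show fRaw τ ((0:ℤ), some (τ + 1, r)) = _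
        simp only [fRaw]
        rw [if_neg hA, if_neg hB, z12]
      · have hm : 1 ≤ m := by omega
        have hval := ih hm
        have hOKr : OK ((0:ℤ), some (τ, m :: r)) := by
          obtain ⟨hne, hall⟩ := h
          exact ⟨List.cons_ne_nil _ _, by
            intro x hx
            rcases List.mem_cons.mp hx with hh | hh
            · omega
            · exact hall x hh⟩
        have heq : (φ (a τ ^ m)) ⟨((0:ℤ), some (τ + 1, r)), h⟩
            = ⟨((0:ℤ), some (τ, m :: r)), hOKr⟩ := Subtype.ext hval
        rw [pow_succ' (a τ) m, map_mul, Equiv.Perm.mul_apply, heq, φ_a, Fp_apply]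
        show fRaw τ ((0:ℤ), some (τ, m :: r)) = _
        simp only [fRaw, cast0, add_zero, if_true, List.headD_cons, List.tail_cons]

lemma tail_recon : ∀ (s : List ℕ) (τ : ZMod 3), s ≠ [] → (∀ x ∈ s, 1 ≤ x) →
    ((φ (tailProd τ s)) pt).1 = ((0 : ℤ), some (τ, s)) := by
  intro s
  induction s with
  | nil => intro τ h; exact absurd rfl h
  | cons n t ih =>
      intro τ _ hall
      have hn : 1 ≤ n := hall n (List.mem_cons_self)
      match t with
      | [] =>
          rw [tailProd_cons, tailProd_nil, mul_one]
          exact powB τ n hn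
      | u :: t' =>
          have hval := ih (τ + 1) (List.cons_ne_nil _ _)
            (fun x hx => hall x (List.mem_cons_of_mem _ hx))
          have hOKr : OK ((0:ℤ), some (τ + 1, u :: t')) :=
            ⟨List.cons_ne_nil _ _, fun x hx => hall x (List.mem_cons_of_mem _ hx)⟩
          have heq : (φ (tailProd (τ + 1) (u :: t'))) pt
              = ⟨((0:ℤ), some (τ + 1, u :: t')), hOKr⟩ := Subtype.ext hval
          rw [tailProd_cons, map_mul, Equiv.Perm.mul_apply, heq]
          exact powA τ (u :: t') hOKr n hn

lemma recon (q : ℤ) (T : Option (ZMod 3 × List ℕ)) (hT : tailOK T) :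
    ((φ (δ ^ q * tailVal T)) pt).1 = (q, T) := by
  rw [map_mul, Equiv.Perm.mul_apply]
  match T with
  | none =>
      rw [show tailVal none = 1 from rfl, map_one, Equiv.Perm.one_apply, φδq]
      show ((0 : ℤ) + q, (none : Option (ZMod 3 × List ℕ))) = _
      rw [zero_add]
  | some (τ, s) =>
      obtain ⟨hne, hall⟩ := hT
      have hval := tail_recon s τ hne hall
      have hOKr : OK ((0:ℤ), some (τ, s)) := ⟨hne, hall⟩
      have heq : (φ (tailVal (some (τ, s)))) pt = ⟨((0:ℤ), some (τ, s)), hOKr⟩ :=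
        Subtype.ext hval
      rw [heq, φδq]
      show ((0 : ℤ) + q, _) = _
      rw [zero_add]

end B3NF

/-- Among all representations `β = δ^q · T` with `T` empty or a positive word in
increasing form, there is exactly one with `q` maximal: the power `q`, and the tail
datum (the number `t` of syllables, the initial subscript `τ` when `t > 0`, and the
exponent sequence `(s₁, …, s_t)`) are all uniquely determined by `β`.  This normal
form solves the word problem in `B₃`. -/
theorem normal_form_exists_unique (β : BandB3) :
    ∃! nf : ℤ × Option (ZMod 3 × List ℕ),
      tailOK nf.2 ∧ β = δ ^ nf.1 * tailVal nf.2 ∧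
        ∀ (q : ℤ) (T : Option (ZMod 3 × List ℕ)),
          tailOK T → β = δ ^ q * tailVal T → q ≤ nf.1 := by
  classical
  set nf : B3NF.Raw := ((B3NF.φ β) B3NF.pt).1 with hnf
  have hOK : tailOK nf.2 := ((B3NF.φ β) B3NF.pt).2
  have hvalpt : B3NF.V B3NF.pt.1 = 1 := by
    show δ ^ (0:ℤ) * tailVal none = 1
    simp [tailVal]
  have hval : β = δ ^ nf.1 * tailVal nf.2 := by
    have h := B3NF.Vφ β B3NF.pt
    rw [hvalpt, mul_one] at h
    exact h.symm
  have key : ∀ (q : ℤ) (T : Option (ZMod 3 × List ℕ)),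
      tailOK T → β = δ ^ q * tailVal T → (q, T) = nf := by
    intro q T hT hβ
    rw [hnf, hβ]
    exact (B3NF.recon q T hT).symm
  refine ⟨nf, ⟨hOK, hval, ?_⟩, ?_⟩
  · intro q T hT hβ
    have h := key q T hT hβ
    exact le_of_eq (congrArg Prod.fst h)
  · rintro ⟨q, T⟩ ⟨hT, hβ, _⟩
    exact key q T hT hβ
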